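/- arXiv:2008.12070 — 2 statements merged into one kernel-verified Lean document; each statement's English description precedes it below -/
import Mathlib

section
/- Law of total linear covariance: Cov[U,W] = Cov[E^A[U|V], E^A[W|V]] + Cov[R^A[U|V], R^A[W|V]], where R^A[X|V] := X − E^A[X|V]. In particular, Cov[U] ≥ Cov[E[U|V]] ≥ Cov[E^A[U|V]] ≥ 0 in the sense of self-adjoint operators. -/
open MeasureTheory

noncomputable section
set_option linter.unusedSectionVars false
set_option linter.unusedVariables false
set_option maxHeartbeats 1000000

variable {Ω : Type*} [MeasurableSpace Ω]

/-- The set of (classes of) bounded affine transformations `ω ↦ b + A (V ω)` of `V` in `L²`. -/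
def affSet {H G : Type*} [NormedAddCommGroup H] [InnerProductSpace ℝ H]
    [NormedAddCommGroup G] [InnerProductSpace ℝ G]
    (μ : Measure Ω) (V : Lp H 2 μ) : Set (Lp G 2 μ) :=
  {f | ∃ (b : G) (A : H →L[ℝ] G), (f : Ω → G) =ᵐ[μ] fun ω => b + A (V ω)}

/-- `IsLCE μ U UA V` : `UA` is the linear conditional expectation `E^A[U|V]`, i.e. the
orthogonal projection of `U` in `L²(P;G)` onto the `L²`-closure of the set of bounded affine
transformations of `V`. -/
def IsLCE {H G : Type*} [NormedAddCommGroup H] [InnerProductSpace ℝ H]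
    [NormedAddCommGroup G] [InnerProductSpace ℝ G]
    (μ : Measure Ω) (U UA : Lp G 2 μ) (V : Lp H 2 μ) : Prop :=
  UA ∈ closure (affSet μ V) ∧
  ∀ s ∈ closure (affSet μ V), @inner ℝ _ _ (U - UA) s = (0 : ℝ)

/-- The cross-covariance operator `Cov[X,Y] = E[(X−E X) ⊗ (Y−E Y)]` of `X` and `Y`,
as the map `f ↦ E[⟪Y − E Y, f⟫ • (X − E X)]`. -/
def cov {E F : Type*} [NormedAddCommGroup E] [InnerProductSpace ℝ E] [CompleteSpace E]
    [NormedAddCommGroup F] [InnerProductSpace ℝ F] [CompleteSpace F]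
    (μ : Measure Ω) (X : Ω → E) (Y : Ω → F) : F → E :=
  fun f => ∫ ω, (@inner ℝ _ _ (Y ω - ∫ ω', Y ω' ∂μ) f) • (X ω - ∫ ω', X ω' ∂μ) ∂μ

section Helpers
variable {Ω : Type*} [MeasurableSpace Ω]

variable {μ : Measure Ω} [IsProbabilityMeasure μ]
variable {F G : Type*}
  [NormedAddCommGroup F] [InnerProductSpace ℝ F] [CompleteSpace F] [SecondCountableTopology F]
  [NormedAddCommGroup G] [InnerProductSpace ℝ G] [CompleteSpace G] [SecondCountableTopology G]

def oneL (μ : Measure Ω) [IsProbabilityMeasure μ] : Lp ℝ 2 μ :=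
  MemLp.toLp _ (memLp_const (1:ℝ))

lemma oneL_coeFn : (oneL μ : Ω → ℝ) =ᵐ[μ] fun _ => (1:ℝ) := MemLp.coeFn_toLp _

def projL (g : G) (X : Lp G 2 μ) : Lp ℝ 2 μ := (innerSL ℝ g).compLp X

lemma projL_coeFn (g : G) (X : Lp G 2 μ) :
    (projL g X : Ω → ℝ) =ᵐ[μ] fun ω => @inner ℝ _ _ g (X ω) :=
  (innerSL ℝ g).coeFn_compLp X

lemma inner_oneL (f : Lp ℝ 2 μ) : @inner ℝ _ _ f (oneL μ) = ∫ ω, f ω ∂μ := by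
  rw [L2.inner_def]
  refine integral_congr_ae ?_
  filter_upwards [oneL_coeFn (μ := μ)] with ω h
  simp [h, RCLike.inner_apply]

lemma integral_projL (g : G) (X : Lp G 2 μ) :
    ∫ ω, (@inner ℝ _ _ g (X ω)) ∂μ = @inner ℝ _ _ (projL g X) (oneL μ) := by
  rw [inner_oneL]
  exact (integral_congr_ae (projL_coeFn g X)).symm

lemma projL_sub (g : G) (X Y : Lp G 2 μ) : projL g (X - Y) = projL g X - projL g Y := by
  refine Lp.ext ?_
  filter_upwards [projL_coeFn g (X - Y), Lp.coeFn_sub X Y,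
    Lp.coeFn_sub (projL g X) (projL g Y), projL_coeFn g X, projL_coeFn g Y]
      with ω h1 h2 h3 h4 h5
  rw [h1, h3, Pi.sub_apply, h4, h5, h2, Pi.sub_apply, inner_sub_right]

lemma cov_congr {X X' : Ω → G} {Y Y' : Ω → F} (hX : X =ᵐ[μ] X') (hY : Y =ᵐ[μ] Y') :
    cov μ X Y = cov μ X' Y' := by
  have hmX : (∫ ω, X ω ∂μ) = ∫ ω, X' ω ∂μ := integral_congr_ae hX
  have hmY : (∫ ω, Y ω ∂μ) = ∫ ω, Y' ω ∂μ := integral_congr_ae hY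
  funext f
  simp only [cov, hmX, hmY]
  refine integral_congr_ae ?_
  filter_upwards [hX, hY] with ω h1 h2
  rw [h1, h2]

lemma inner_cov_eq (X : Lp G 2 μ) (Y : Lp F 2 μ) (f : F) (g : G) :
    @inner ℝ _ _ (cov μ (X : Ω → G) (Y : Ω → F) f) g
      = @inner ℝ _ _ (projL f Y - (∫ ω, @inner ℝ _ _ f (Y ω) ∂μ) • oneL μ)
                     (projL g X - (∫ ω, @inner ℝ _ _ g (X ω) ∂μ) • oneL μ) := by
  have hXi : Integrable (X : Ω → G) μ := (Lp.memLp X).integrable one_le_two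
  have hYi : Integrable (Y : Ω → F) μ := (Lp.memLp Y).integrable one_le_two
  have hX2 : MemLp (fun ω => X ω - ∫ ω', X ω' ∂μ) 2 μ := (Lp.memLp X).sub (memLp_const _)
  have hY2 : MemLp (fun ω => Y ω - ∫ ω', Y ω' ∂μ) 2 μ := (Lp.memLp Y).sub (memLp_const _)
  have hYf : MemLp (fun ω => (@inner ℝ _ _ (Y ω - ∫ ω', Y ω' ∂μ) f : ℝ)) 2 μ := hY2.inner_const f
  have hint : Integrable
      (fun ω => (@inner ℝ _ _ (Y ω - ∫ ω', Y ω' ∂μ) f : ℝ) • (X ω - ∫ ω', X ω' ∂μ)) μ := by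
    rw [← memLp_one_iff_integrable]
    exact MemLp.smul (r := 1) hX2 hYf
  have h1 : @inner ℝ _ _ (cov μ (X : Ω → G) (Y : Ω → F) f) g
      = ∫ ω, (@inner ℝ _ _ (Y ω - ∫ ω', Y ω' ∂μ) f : ℝ)
          * (@inner ℝ _ _ g (X ω - ∫ ω', X ω' ∂μ)) ∂μ := by
    simp only [cov]
    rw [real_inner_comm, ← integral_inner hint g]
    refine integral_congr_ae (Filter.Eventually.of_forall fun ω => ?_)
    dsimp only
    rw [real_inner_smul_right]
  rw [h1, L2.inner_def]
  refine integral_congr_ae ?_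
  filter_upwards [Lp.coeFn_sub (projL f Y) ((∫ ω, (@inner ℝ _ _ f (Y ω)) ∂μ) • oneL μ),
    Lp.coeFn_sub (projL g X) ((∫ ω, (@inner ℝ _ _ g (X ω)) ∂μ) • oneL μ),
    Lp.coeFn_smul (∫ ω, (@inner ℝ _ _ f (Y ω)) ∂μ) (oneL μ),
    Lp.coeFn_smul (∫ ω, (@inner ℝ _ _ g (X ω)) ∂μ) (oneL μ),
    oneL_coeFn (μ := μ), projL_coeFn f Y, projL_coeFn g X] with ω e1 e2 e3 e4 e5 e6 e7
  rw [e1, e2, Pi.sub_apply, Pi.sub_apply, e3, e4, e6, e7, Pi.smul_apply, Pi.smul_apply, e5]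
  simp only [smul_eq_mul, mul_one, RCLike.inner_apply, conj_trivial]
  have hY' : ∀ y : F, @inner ℝ _ _ y f = @inner ℝ _ _ f y := fun y => real_inner_comm f y
  rw [inner_sub_left, hY', hY', inner_sub_right, integral_inner hYi f, integral_inner hXi g]
  ring


variable {H : Type*}
  [NormedAddCommGroup H] [InnerProductSpace ℝ H] [CompleteSpace H] [SecondCountableTopology H]

def affSet' (μ : Measure Ω) (V : Lp H 2 μ) {G : Type*} [NormedAddCommGroup G]
    [InnerProductSpace ℝ G] : Set (Lp G 2 μ) :=
  {f | ∃ (b : G) (A : H →L[ℝ] G), (f : Ω → G) =ᵐ[μ] fun ω => b + A (V ω)}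

/-- `affSet` as a submodule. -/
def affSub (μ : Measure Ω) [IsProbabilityMeasure μ] (V : Lp H 2 μ) (G : Type*)
    [NormedAddCommGroup G] [InnerProductSpace ℝ G] : Submodule ℝ (Lp G 2 μ) where
  carrier := affSet' μ V
  zero_mem' := ⟨0, 0, by filter_upwards [Lp.coeFn_zero G 2 μ] with ω h; simp [h]⟩
  add_mem' := by
    rintro a b ⟨c, A, ha⟩ ⟨d, B, hb⟩
    exact ⟨c + d, A + B, by
      filter_upwards [Lp.coeFn_add a b, ha, hb] with ω h1 h2 h3
      simp only [h1, Pi.add_apply, h2, h3, ContinuousLinearMap.add_apply]; abel⟩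
  smul_mem' := by
    rintro r a ⟨c, A, ha⟩
    exact ⟨r • c, r • A, by
      filter_upwards [Lp.coeFn_smul r a, ha] with ω h1 h2
      simp [h1, h2, smul_add]⟩

lemma oneL_mem_affSet (V : Lp H 2 μ) : oneL μ ∈ affSet' μ V :=
  ⟨1, 0, by filter_upwards [oneL_coeFn (μ := μ)] with ω h; simp [h]⟩

lemma smul_oneL_mem_closure (V : Lp H 2 μ) (c : ℝ) :
    c • oneL μ ∈ closure (affSet' μ V) :=
  subset_closure (Submodule.smul_mem (affSub μ V ℝ) c (oneL_mem_affSet V))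

lemma compLp_mem_closure_affSet (V : Lp H 2 μ) {G' F' : Type*} [NormedAddCommGroup G']
    [InnerProductSpace ℝ G'] [NormedAddCommGroup F'] [InnerProductSpace ℝ F']
    (L : G' →L[ℝ] F') {u : Lp G' 2 μ} (hu : u ∈ closure (affSet' μ V)) :
    L.compLp u ∈ closure (affSet' (G := F') μ V) := by
  have he : L.compLp u = L.compLpL 2 μ u := rfl
  rw [he]
  refine map_mem_closure (L.compLpL 2 μ).continuous hu ?_
  rintro x ⟨b, A, hx⟩
  refine ⟨L b, L.comp A, ?_⟩
  filter_upwards [L.coeFn_compLpL x, hx] with ω h1 h2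
  rw [h1, h2]; simp

lemma sub_mem_closure_affSet (V : Lp H 2 μ) {G' : Type*} [NormedAddCommGroup G']
    [InnerProductSpace ℝ G'] {u v : Lp G' 2 μ} (hu : u ∈ closure (affSet' μ V))
    (hv : v ∈ closure (affSet' μ V)) : u - v ∈ closure (affSet' μ V) := by
  have hcar : affSet' (G := G') μ V = ((affSub μ V G') : Set (Lp G' 2 μ)) := rfl
  have hset : closure ((affSub μ V G') : Set (Lp G' 2 μ))
      = ((affSub μ V G').topologicalClosure : Set (Lp G' 2 μ)) :=
    (Submodule.topologicalClosure_coe _).symm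
  rw [hcar, hset] at hu hv ⊢
  exact Submodule.sub_mem _ hu hv

/-- transfer of LCE orthogonality to scalar observables. -/
lemma orth_scalar {V : Lp H 2 μ} {U UA : Lp G 2 μ}
    (h : ∀ s ∈ closure (affSet' (G := G) μ V), @inner ℝ _ _ (U - UA) s = (0:ℝ)) (g : G)
    {s : Lp ℝ 2 μ} (hs : s ∈ closure (affSet' (G := ℝ) μ V)) :
    @inner ℝ _ _ (projL g U - projL g UA) s = 0 := by
  have hmem := compLp_mem_closure_affSet V (ContinuousLinearMap.toSpanSingleton ℝ g) hs
  have h0 := h _ hmem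
  rw [L2.inner_def] at h0 ⊢
  rw [← h0]
  refine integral_congr_ae ?_
  filter_upwards [Lp.coeFn_sub U UA, Lp.coeFn_sub (projL g U) (projL g UA),
    projL_coeFn g U, projL_coeFn g UA,
    (ContinuousLinearMap.toSpanSingleton ℝ g).coeFn_compLp s] with ω h1 h2 h3 h4 h5
  rw [h2, Pi.sub_apply, h3, h4, h1, h5, Pi.sub_apply, ContinuousLinearMap.toSpanSingleton_apply]
  simp only [RCLike.inner_apply, conj_trivial, inner_smul_right, inner_sub_left]
  have hc : ∀ u : G, @inner ℝ _ _ u g = @inner ℝ _ _ g u := fun u => real_inner_comm g u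
  rw [hc, hc]


lemma closure_affSet_subset_lpMeas [MeasurableSpace H] [BorelSpace H] (V : Lp H 2 μ) :
    closure (affSet' (G := ℝ) μ V) ⊆
      ((lpMeas ℝ ℝ (MeasurableSpace.comap (V : Ω → H) ‹MeasurableSpace H›) 2 μ) :
        Set (Lp ℝ 2 μ)) := by
  have hVm : Measurable[MeasurableSpace.comap (V : Ω → H) ‹MeasurableSpace H›] (V : Ω → H) :=
    Measurable.of_comap_le le_rfl
  have hm : MeasurableSpace.comap (V : Ω → H) ‹MeasurableSpace H› ≤ _ :=
    Measurable.comap_le (Lp.stronglyMeasurable V).measurable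
  have hclosed : IsClosed ((lpMeas ℝ ℝ (MeasurableSpace.comap (V : Ω → H) ‹MeasurableSpace H›) 2 μ :
      Submodule ℝ (Lp ℝ 2 μ)) : Set (Lp ℝ 2 μ)) := by
    have h : ((lpMeas ℝ ℝ (MeasurableSpace.comap (V : Ω → H) ‹MeasurableSpace H›) 2 μ :
        Submodule ℝ (Lp ℝ 2 μ)) : Set (Lp ℝ 2 μ))
        = {f : Lp ℝ 2 μ | AEStronglyMeasurable[
            (MeasurableSpace.comap (V : Ω → H) ‹MeasurableSpace H›)] (f : Ω → ℝ) μ} := by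
      ext f; exact mem_lpMeas_iff_aestronglyMeasurable
    rw [h]
    exact isClosed_aestronglyMeasurable hm
  refine closure_minimal ?_ hclosed
  rintro x ⟨b, A, hx⟩
  rw [SetLike.mem_coe, mem_lpMeas_iff_aestronglyMeasurable]
  exact ⟨fun ω => b + A ((V : Ω → H) ω),
    measurable_const.add ((A.continuous.measurable).comp hVm) |>.stronglyMeasurable, hx⟩

end Helpers

section Cond
variable {Ω : Type*} {m mΩ : MeasurableSpace Ω} {μ : Measure Ω} [IsProbabilityMeasure μ]
  {G : Type*} [NormedAddCommGroup G] [InnerProductSpace ℝ G] [CompleteSpace G]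
  [SecondCountableTopology G]

lemma oneL_mem_lpMeas (hm : m ≤ mΩ) : oneL μ ∈ lpMeas ℝ ℝ m 2 μ := by
  rw [mem_lpMeas_iff_aestronglyMeasurable]
  exact ⟨fun _ => (1:ℝ), @stronglyMeasurable_const Ω ℝ m _ _, oneL_coeFn⟩

lemma condExpL2_ae_eq_condexp (hm : m ≤ mΩ) (U : Lp G 2 μ) :
    (((condExpL2 G ℝ hm U : Lp G 2 μ)) : Ω → G) =ᵐ[μ] μ[(U : Ω → G)|m] :=
  ae_eq_condExp_of_forall_setIntegral_eq hm ((Lp.memLp U).integrable one_le_two)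
    (fun s _ hμs => integrableOn_condExpL2_of_measure_ne_top hm hμs.ne U)
    (fun s hs hμs => integral_condExpL2_eq hm U hs hμs.ne)
    (aestronglyMeasurable_condExpL2 hm U)

lemma inner_sub_condExpL2_eq_zero (hm : m ≤ mΩ)
    (u : Lp ℝ 2 μ) {s : Lp ℝ 2 μ} (hs : s ∈ lpMeas ℝ ℝ m 2 μ) :
    @inner ℝ _ _ (u - (condExpL2 ℝ ℝ hm u : Lp ℝ 2 μ)) s = 0 := by
  haveI : Fact (m ≤ mΩ) := ⟨hm⟩
  exact Submodule.starProjection_inner_eq_zero u s hs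

lemma integral_condExpL2' (hm : m ≤ mΩ) (u : Lp ℝ 2 μ) :
    ∫ ω, ((condExpL2 ℝ ℝ hm u : Lp ℝ 2 μ) : Ω → ℝ) ω ∂μ = ∫ ω, u ω ∂μ := by
  have h := integral_condExpL2_eq (𝕜 := ℝ) hm u MeasurableSet.univ (measure_ne_top μ _)
  simpa [setIntegral_univ] using h

lemma projL_condExpL2 (hm : m ≤ mΩ) (U : Lp G 2 μ) (g : G) :
    projL g ((condExpL2 G ℝ hm U : Lp G 2 μ)) = (condExpL2 ℝ ℝ hm (projL g U) : Lp ℝ 2 μ) :=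
  (Lp.ext (condExpL2_comp_continuousLinearMap ℝ ℝ hm (innerSL ℝ g) U)).symm

end Cond

/-- Law of total linear covariance:
`Cov[U,W] = Cov[E^A[U|V], E^A[W|V]] + Cov[R^A[U|V], R^A[W|V]]`, and in particular
`Cov[U] ≥ Cov[E[U|V]] ≥ Cov[E^A[U|V]] ≥ 0` in the Loewner order. -/


theorem lce_law_of_total_covariance
    (μ : Measure Ω) [IsProbabilityMeasure μ]
    {F G H : Type*}
    [NormedAddCommGroup F] [InnerProductSpace ℝ F] [CompleteSpace F] [SecondCountableTopology F]
    [NormedAddCommGroup G] [InnerProductSpace ℝ G] [CompleteSpace G] [SecondCountableTopology G]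
    [NormedAddCommGroup H] [InnerProductSpace ℝ H] [CompleteSpace H] [SecondCountableTopology H]
    [MeasurableSpace H] [BorelSpace H]
    (U UA : Lp G 2 μ) (W WA : Lp F 2 μ) (V : Lp H 2 μ)
    (hUA : IsLCE μ U UA V) (hWA : IsLCE μ W WA V) :
    (∀ f : F, cov μ (U : Ω → G) (W : Ω → F) f =
        cov μ (UA : Ω → G) (WA : Ω → F) f +
        cov μ (fun ω => U ω - UA ω) (fun ω => W ω - WA ω) f) ∧
    (∀ g : G,
      @inner ℝ _ _ (cov μ (U : Ω → G) (U : Ω → G) g) g ≥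
        @inner ℝ _ _
          (cov μ (μ[(U : Ω → G) | MeasurableSpace.comap (V : Ω → H) ‹MeasurableSpace H›])
               (μ[(U : Ω → G) | MeasurableSpace.comap (V : Ω → H) ‹MeasurableSpace H›]) g) g ∧
      @inner ℝ _ _
          (cov μ (μ[(U : Ω → G) | MeasurableSpace.comap (V : Ω → H) ‹MeasurableSpace H›])
               (μ[(U : Ω → G) | MeasurableSpace.comap (V : Ω → H) ‹MeasurableSpace H›]) g) g ≥
        @inner ℝ _ _ (cov μ (UA : Ω → G) (UA : Ω → G) g) g ∧
      @inner ℝ _ _ (cov μ (UA : Ω → G) (UA : Ω → G) g) g ≥ 0) := by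
  obtain ⟨hUA1, hUA2⟩ := hUA
  obtain ⟨hWA1, hWA2⟩ := hWA
  replace hUA1 : UA ∈ closure (affSet' (G := G) μ V) := hUA1
  replace hWA1 : WA ∈ closure (affSet' (G := F) μ V) := hWA1
  replace hUA2 : ∀ s ∈ closure (affSet' (G := G) μ V), @inner ℝ _ _ (U - UA) s = (0:ℝ) := hUA2
  replace hWA2 : ∀ s ∈ closure (affSet' (G := F) μ V), @inner ℝ _ _ (W - WA) s = (0:ℝ) := hWA2
  have hone : oneL μ ∈ closure (affSet' (G := ℝ) μ V) := subset_closure (oneL_mem_affSet V)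
  -- scalar orthogonality
  have hOu : ∀ g : G, ∀ s ∈ closure (affSet' (G := ℝ) μ V),
      @inner ℝ _ _ (projL g U - projL g UA) s = 0 := fun g s hs => orth_scalar hUA2 g hs
  have hOw : ∀ f : F, ∀ s ∈ closure (affSet' (G := ℝ) μ V),
      @inner ℝ _ _ (projL f W - projL f WA) s = 0 := fun f s hs => orth_scalar hWA2 f hs
  -- equality of means
  have hmU : ∀ g : G, (∫ ω, @inner ℝ _ _ g (UA ω) ∂μ) = ∫ ω, @inner ℝ _ _ g (U ω) ∂μ := by
    intro g
    have h0 := hOu g _ hone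
    rw [inner_sub_left] at h0
    rw [integral_projL, integral_projL]
    linarith
  have hmW : ∀ f : F, (∫ ω, @inner ℝ _ _ f (WA ω) ∂μ) = ∫ ω, @inner ℝ _ _ f (W ω) ∂μ := by
    intro f
    have h0 := hOw f _ hone
    rw [inner_sub_left] at h0
    rw [integral_projL, integral_projL]
    linarith
  have hmemUA : ∀ g : G, projL g UA - (∫ ω, @inner ℝ _ _ g (U ω) ∂μ) • oneL μ
      ∈ closure (affSet' (G := ℝ) μ V) := fun g =>
    sub_mem_closure_affSet V (compLp_mem_closure_affSet V (innerSL ℝ g) hUA1)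
      (smul_oneL_mem_closure V _)
  have hmemWA : ∀ f : F, projL f WA - (∫ ω, @inner ℝ _ _ f (W ω) ∂μ) • oneL μ
      ∈ closure (affSet' (G := ℝ) μ V) := fun f =>
    sub_mem_closure_affSet V (compLp_mem_closure_affSet V (innerSL ℝ f) hWA1)
      (smul_oneL_mem_closure V _)
  constructor
  · -- Part 1
    intro f
    refine ext_inner_right ℝ fun g => ?_
    rw [inner_add_left]
    have hd : cov μ (fun ω => U ω - UA ω) (fun ω => W ω - WA ω)
        = cov μ (((U - UA : Lp G 2 μ)) : Ω → G) (((W - WA : Lp F 2 μ)) : Ω → F) :=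
      cov_congr (Lp.coeFn_sub U UA).symm (Lp.coeFn_sub W WA).symm
    rw [hd, inner_cov_eq, inner_cov_eq, inner_cov_eq, projL_sub, projL_sub]
    have hcd1 : (∫ ω, @inner ℝ _ _ g (((U - UA : Lp G 2 μ) : Ω → G) ω) ∂μ) = 0 := by
      rw [integral_projL, projL_sub]
      exact hOu g _ hone
    have hcd2 : (∫ ω, @inner ℝ _ _ f (((W - WA : Lp F 2 μ) : Ω → F) ω) ∂μ) = 0 := by
      rw [integral_projL, projL_sub]
      exact hOw f _ hone
    rw [hcd1, hcd2, zero_smul, sub_zero, sub_zero, hmU g, hmW f]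
    set cu := ∫ ω, @inner ℝ _ _ g (U ω) ∂μ
    set cw := ∫ ω, @inner ℝ _ _ f (W ω) ∂μ
    have e1 : projL f W - cw • oneL μ
        = (projL f WA - cw • oneL μ) + (projL f W - projL f WA) := by abel
    have e2 : projL g U - cu • oneL μ
        = (projL g UA - cu • oneL μ) + (projL g U - projL g UA) := by abel
    rw [e1, e2, inner_add_left, inner_add_right, inner_add_right]
    have z1 : @inner ℝ _ _ (projL f W - projL f WA) (projL g UA - cu • oneL μ) = 0 :=
      hOw f _ (hmemUA g)
    have z2 : @inner ℝ _ _ (projL f WA - cw • oneL μ) (projL g U - projL g UA) = 0 := by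
      rw [real_inner_comm]
      exact hOu g _ (hmemWA f)
    rw [z1, z2]
    ring
  · -- Part 2
    intro g
    have hm : MeasurableSpace.comap (V : Ω → H) ‹MeasurableSpace H› ≤ ‹MeasurableSpace Ω› :=
      Measurable.comap_le (Lp.stronglyMeasurable V).measurable
    have hce := condExpL2_ae_eq_condexp hm U
    have hrw : cov μ (μ[(U : Ω → G) | MeasurableSpace.comap (V : Ω → H) ‹MeasurableSpace H›])
        (μ[(U : Ω → G) | MeasurableSpace.comap (V : Ω → H) ‹MeasurableSpace H›])
        = cov μ (((condExpL2 G ℝ hm U : Lp G 2 μ)) : Ω → G)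
            (((condExpL2 G ℝ hm U : Lp G 2 μ)) : Ω → G) :=
      cov_congr hce.symm hce.symm
    rw [hrw, inner_cov_eq, inner_cov_eq, inner_cov_eq, hmU g]
    set cu := ∫ ω, @inner ℝ _ _ g (U ω) ∂μ with hcu
    set Q : Lp ℝ 2 μ := (condExpL2 ℝ ℝ hm (projL g U) : Lp ℝ 2 μ) with hQ
    have hpq : projL g ((condExpL2 G ℝ hm U : Lp G 2 μ)) = Q := projL_condExpL2 hm U g
    have hcq : (∫ ω, @inner ℝ _ _ g (((condExpL2 G ℝ hm U : Lp G 2 μ)) ω) ∂μ) = cu := by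
      rw [integral_projL, hpq, inner_oneL, hQ, integral_condExpL2' hm, hcu, integral_projL,
        inner_oneL]
    rw [hcq, hpq]
    set e := oneL μ
    set u' := projL g U - cu • e with hu'
    set q' := Q - cu • e with hq'
    set ua' := projL g UA - cu • e with hua'
    have hmemua : ua' ∈ closure (affSet' (G := ℝ) μ V) := hmemUA g
    have hmemua_lp : ua' ∈ lpMeas ℝ ℝ
        (MeasurableSpace.comap (V : Ω → H) ‹MeasurableSpace H›) 2 μ :=
      closure_affSet_subset_lpMeas V hmemua
    have hq'mem : q' ∈ lpMeas ℝ ℝ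
        (MeasurableSpace.comap (V : Ω → H) ‹MeasurableSpace H›) 2 μ :=
      Submodule.sub_mem _ (condExpL2 ℝ ℝ hm (projL g U)).2
        (Submodule.smul_mem _ _ (oneL_mem_lpMeas hm))
    have horthN : ∀ s ∈ lpMeas ℝ ℝ
        (MeasurableSpace.comap (V : Ω → H) ‹MeasurableSpace H›) 2 μ,
        @inner ℝ _ _ (projL g U - Q) s = 0 := fun s hs =>
      inner_sub_condExpL2_eq_zero hm (projL g U) hs
    have horthM : ∀ s ∈ closure (affSet' (G := ℝ) μ V),
        @inner ℝ _ _ (projL g U - projL g UA) s = 0 := hOu g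
    -- A ≥ B
    have hud : u' - q' = projL g U - Q := by rw [hu', hq']; abel
    have z1 : @inner ℝ _ _ (u' - q') q' = 0 := by rw [hud]; exact horthN q' hq'mem
    have exp1 : @inner ℝ _ _ u' u' = @inner ℝ _ _ q' q'
        + 2 * @inner ℝ _ _ (u' - q') q' + @inner ℝ _ _ (u' - q') (u' - q') := by
      simp only [inner_sub_left, inner_sub_right]
      rw [real_inner_comm u' q']
      ring
    -- B ≥ C
    have hqd : q' - ua' = (projL g U - projL g UA) - (projL g U - Q) := by
      rw [hq', hua']; abel
    have z2 : @inner ℝ _ _ (q' - ua') ua' = 0 := by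
      rw [hqd, inner_sub_left, horthM _ hmemua, horthN _ hmemua_lp, sub_zero]
    have exp2 : @inner ℝ _ _ q' q' = @inner ℝ _ _ ua' ua'
        + 2 * @inner ℝ _ _ (q' - ua') ua' + @inner ℝ _ _ (q' - ua') (q' - ua') := by
      simp only [inner_sub_left, inner_sub_right]
      rw [real_inner_comm ua' q']
      ring
    have n1 : (0:ℝ) ≤ @inner ℝ _ _ (u' - q') (u' - q') := real_inner_self_nonneg
    have n2 : (0:ℝ) ≤ @inner ℝ _ _ (q' - ua') (q' - ua') := real_inner_self_nonneg
    have n3 : (0:ℝ) ≤ @inner ℝ _ _ ua' ua' := real_inner_self_nonneg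
    refine ⟨by rw [exp1, z1]; linarith, by rw [exp2, z2]; linarith, n3⟩


end
end

section
/- Regularised LCE formula: for every ε > 0, the affine Hilbert–Schmidt map γ_ε(v) := μ_U + C_{UV}(C_V + ε·Id_H)^{-1}(v − μ_V) is the unique minimizer, over all affine maps γ(h) = b + Ah with b ∈ G and A : H→G Hilbert–Schmidt, of the Tikhonov-regularised functional E[‖U − γ∘V‖²_G] + ε‖A‖²_{HS}. -/
open MeasureTheory

noncomputable section

section MyAux

open scoped RealInnerProductSpace
set_option linter.unusedSectionVars false

noncomputable section Aux

variable {Ω : Type*} [MeasurableSpace Ω] {μ : Measure Ω} [IsFiniteMeasure μ]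
variable {G H : Type*}
  [NormedAddCommGroup G] [InnerProductSpace ℝ G] [CompleteSpace G]
  [NormedAddCommGroup H] [InnerProductSpace ℝ H] [CompleteSpace H]
variable {ι : Type*}

lemma my_hilbertBasis_countable [SecondCountableTopology H] (e : HilbertBasis ι ℝ H) :
    Countable ι := by
  apply Pairwise.countable_of_isOpen_disjoint (s := fun i => Metric.ball (e i) (1/2))
  · intro i j hij
    rw [Function.onFun, Set.disjoint_left]
    intro x hxi hxj
    have h1 : ‖e i‖ = 1 := e.orthonormal.1 i
    have h1' : ‖e j‖ = 1 := e.orthonormal.1 j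
    have h0 : ⟪e i, e j⟫ = 0 := e.orthonormal.2 hij
    have h2 : ‖e i - e j‖ ^ 2 = 2 := by
      rw [norm_sub_sq_real, h1, h1', h0]; ring
    have hlt : dist (e i) (e j) < 1 := by
      calc dist (e i) (e j) ≤ dist (e i) x + dist x (e j) := dist_triangle _ _ _
        _ < 1/2 + 1/2 := by
            rw [Metric.mem_ball] at hxi hxj
            exact add_lt_add (by rwa [dist_comm] at hxi) hxj
        _ = 1 := by norm_num
    rw [dist_eq_norm] at hlt
    nlinarith [norm_nonneg (e i - e j)]
  · intro i; exact Metric.isOpen_ball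
  · intro i; exact ⟨e i, Metric.mem_ball_self (by norm_num)⟩

lemma my_integrable_inner {E : Type*} [NormedAddCommGroup E] [InnerProductSpace ℝ E]
    {f g : Ω → E} (hf : MemLp f 2 μ) (hg : MemLp g 2 μ) :
    Integrable (fun ω => ⟪f ω, g ω⟫) μ := by
  have h := L2.integrable_inner (𝕜 := ℝ) (hf.toLp f) (hg.toLp g)
  refine h.congr ?_
  filter_upwards [hf.coeFn_toLp, hg.coeFn_toLp] with ω h1 h2
  rw [h1, h2]

lemma my_integrable_mul {f g : Ω → ℝ} (hf : MemLp f 2 μ) (hg : MemLp g 2 μ) :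
    Integrable (fun ω => f ω * g ω) μ := by
  have := my_integrable_inner (E := ℝ) hf hg
  simpa [RCLike.inner_apply, starRingEnd_apply, star_trivial, mul_comm] using this

lemma my_integral_mul_sq_le {f g : Ω → ℝ} (hf : MemLp f 2 μ) (hg : MemLp g 2 μ) :
    (∫ ω, f ω * g ω ∂μ) ^ 2 ≤ (∫ ω, f ω ^ 2 ∂μ) * (∫ ω, g ω ^ 2 ∂μ) := by
  have h := real_inner_mul_inner_self_le (hf.toLp f) (hg.toLp g)
  have hFG : @inner ℝ _ _ (hf.toLp f) (hg.toLp g) = ∫ ω, f ω * g ω ∂μ := by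
    rw [L2.inner_def]
    refine integral_congr_ae ?_
    filter_upwards [hf.coeFn_toLp, hg.coeFn_toLp] with ω h1 h2
    rw [h1, h2, RCLike.inner_apply, starRingEnd_apply, star_trivial, mul_comm]
  have hFF : @inner ℝ _ _ (hf.toLp f) (hf.toLp f) = ∫ ω, f ω ^ 2 ∂μ := by
    rw [L2.inner_def]
    refine integral_congr_ae ?_
    filter_upwards [hf.coeFn_toLp] with ω h1
    rw [h1, RCLike.inner_apply, starRingEnd_apply, star_trivial, sq]
  have hGG : @inner ℝ _ _ (hg.toLp g) (hg.toLp g) = ∫ ω, g ω ^ 2 ∂μ := by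
    rw [L2.inner_def]
    refine integral_congr_ae ?_
    filter_upwards [hg.coeFn_toLp] with ω h1
    rw [h1, RCLike.inner_apply, starRingEnd_apply, star_trivial, sq]
  rw [hFG, hFF, hGG] at h
  nlinarith [h]


lemma my_summable_integral_inner_sq (e : HilbertBasis ι ℝ H) {w : Ω → H} (hw : MemLp w 2 μ) :
    Summable (fun i => ∫ ω, ⟪w ω, e i⟫ ^ 2 ∂μ) := by
  have hint : ∀ i : ι, Integrable (fun ω => ⟪w ω, e i⟫ ^ 2) μ :=
    fun i => (hw.inner_const (e i)).integrable_sq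
  have hw2 : Integrable (fun ω => ‖w ω‖ ^ 2) μ := (memLp_two_iff_integrable_sq_norm hw.1).1 hw
  apply summable_of_sum_le (c := ∫ ω, ‖w ω‖ ^ 2 ∂μ)
  · intro i; exact integral_nonneg fun ω => sq_nonneg _
  · intro s
    rw [← integral_finset_sum s (fun i _ => hint i)]
    refine integral_mono (integrable_finset_sum s fun i _ => hint i) hw2 fun ω => ?_
    have h := e.orthonormal.sum_inner_products_le (s := s) (w ω)
    simpa [Real.norm_eq_abs, sq_abs, real_inner_comm] using h

lemma my_integrable_inner_smul {w : Ω → H} {x : Ω → G}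
    (hw : MemLp w 2 μ) (hx : MemLp x 2 μ) (h : H) :
    Integrable (fun ω => ⟪w ω, h⟫ • x ω) μ := by
  have hb : Integrable (fun ω => ‖h‖ * (‖w ω‖ * ‖x ω‖)) μ :=
    (my_integrable_mul hw.norm hx.norm).const_mul _
  refine Integrable.mono' hb ((hw.1.inner aestronglyMeasurable_const).smul hx.1) ?_
  refine Filter.Eventually.of_forall fun ω => ?_
  rw [norm_smul, Real.norm_eq_abs]
  calc |⟪w ω, h⟫| * ‖x ω‖ ≤ (‖w ω‖ * ‖h‖) * ‖x ω‖ :=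
        mul_le_mul_of_nonneg_right (abs_real_inner_le_norm _ _) (norm_nonneg _)
    _ = ‖h‖ * (‖w ω‖ * ‖x ω‖) := by ring

lemma my_summable_norm_sq_integral (e : HilbertBasis ι ℝ H) {w : Ω → H} {x : Ω → G}
    (hw : MemLp w 2 μ) (hx : MemLp x 2 μ) :
    Summable (fun i => ‖∫ ω, ⟪w ω, e i⟫ • x ω ∂μ‖ ^ 2) := by
  have hS := my_summable_integral_inner_sq e hw
  refine Summable.of_nonneg_of_le (fun i => sq_nonneg _) (fun i => ?_)
    (hS.mul_right (∫ ω, ‖x ω‖ ^ 2 ∂μ))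
  have h1 : ‖∫ ω, ⟪w ω, e i⟫ • x ω ∂μ‖ ≤ ∫ ω, ‖⟪w ω, e i⟫‖ * ‖x ω‖ ∂μ := by
    refine (norm_integral_le_integral_norm _).trans_eq ?_
    refine integral_congr_ae (Filter.Eventually.of_forall fun ω => ?_)
    simp [norm_smul]
  have h2 : (∫ ω, ‖⟪w ω, e i⟫‖ * ‖x ω‖ ∂μ) ^ 2
      ≤ (∫ ω, ‖⟪w ω, e i⟫‖ ^ 2 ∂μ) * (∫ ω, ‖x ω‖ ^ 2 ∂μ) :=
    my_integral_mul_sq_le (hw.inner_const (e i)).norm hx.norm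
  have h3 : (∫ ω, ‖⟪w ω, e i⟫‖ ^ 2 ∂μ) = ∫ ω, ⟪w ω, e i⟫ ^ 2 ∂μ := by
    refine integral_congr_ae (Filter.Eventually.of_forall fun ω => ?_)
    simp [Real.norm_eq_abs, sq_abs]
  calc ‖∫ ω, ⟪w ω, e i⟫ • x ω ∂μ‖ ^ 2 ≤ (∫ ω, ‖⟪w ω, e i⟫‖ * ‖x ω‖ ∂μ) ^ 2 :=
        pow_le_pow_left₀ (norm_nonneg _) h1 2
    _ ≤ (∫ ω, ⟪w ω, e i⟫ ^ 2 ∂μ) * (∫ ω, ‖x ω‖ ^ 2 ∂μ) := by rw [← h3]; exact h2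


lemma my_integral_inner_eq_tsum [Countable ι] (e : HilbertBasis ι ℝ H)
    {w : Ω → H} {x : Ω → G} (hw : MemLp w 2 μ) (hx : MemLp x 2 μ)
    (A : H →L[ℝ] G) (hA : Summable fun i => ‖A (e i)‖ ^ 2) :
    ∫ ω, ⟪x ω, A (w ω)⟫ ∂μ = ∑' i, ⟪∫ ω, ⟪w ω, e i⟫ • x ω ∂μ, A (e i)⟫ := by
  set f : ι → Ω → ℝ := fun i ω => ⟪w ω, e i⟫ * ⟪x ω, A (e i)⟫ with hf
  have hint : ∀ i, Integrable (f i) μ :=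
    fun i => my_integrable_mul (hw.inner_const (e i)) (hx.inner_const (A (e i)))
  have hpt : ∀ ω, ⟪x ω, A (w ω)⟫ = ∑' i, f i ω := by
    intro ω
    calc ⟪x ω, A (w ω)⟫ = ⟪(ContinuousLinearMap.adjoint A) (x ω), w ω⟫ :=
          (ContinuousLinearMap.adjoint_inner_left A (w ω) (x ω)).symm
      _ = ∑' i, ⟪(ContinuousLinearMap.adjoint A) (x ω), e i⟫ * ⟪e i, w ω⟫ :=
          (e.hasSum_inner_mul_inner _ _).tsum_eq.symm
      _ = ∑' i, f i ω := by
          refine tsum_congr fun i => ?_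
          show _ = ⟪w ω, e i⟫ * ⟪x ω, A (e i)⟫
          rw [ContinuousLinearMap.adjoint_inner_left, real_inner_comm (e i)]
          ring
  have hx2 : Integrable (fun ω => ‖x ω‖ ^ 2) μ := (memLp_two_iff_integrable_sq_norm hx.1).1 hx
  have hbound : ∀ i, ∫ ω, ‖f i ω‖ ∂μ
      ≤ (∫ ω, ⟪w ω, e i⟫ ^ 2 ∂μ) * (1/2) + ‖A (e i)‖ ^ 2 * ((∫ ω, ‖x ω‖ ^ 2 ∂μ) * (1/2)) := by
    intro i
    have hib : Integrable (fun ω => ⟪w ω, e i⟫ ^ 2 * (1/2) + ‖A (e i)‖ ^ 2 * (‖x ω‖ ^ 2 * (1/2))) μ :=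
      (((hw.inner_const (e i)).integrable_sq).mul_const _).add ((hx2.mul_const _).const_mul _)
    have hle : ∀ ω, ‖f i ω‖ ≤ ⟪w ω, e i⟫ ^ 2 * (1/2) + ‖A (e i)‖ ^ 2 * (‖x ω‖ ^ 2 * (1/2)) := by
      intro ω
      have h1 : |⟪x ω, A (e i)⟫| ≤ ‖x ω‖ * ‖A (e i)‖ := abs_real_inner_le_norm _ _
      have h2 : ‖f i ω‖ = |⟪w ω, e i⟫| * |⟪x ω, A (e i)⟫| := by
        rw [hf, Real.norm_eq_abs, abs_mul]
      nlinarith [abs_nonneg (⟪w ω, e i⟫), abs_nonneg (⟪x ω, A (e i)⟫),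
        sq_abs (⟪w ω, e i⟫), sq_nonneg (|⟪w ω, e i⟫| - |⟪x ω, A (e i)⟫|),
        norm_nonneg (x ω), norm_nonneg (A (e i)), sq_abs (⟪x ω, A (e i)⟫),
        mul_le_mul_of_nonneg_left h1 (abs_nonneg (⟪w ω, e i⟫))]
    calc ∫ ω, ‖f i ω‖ ∂μ ≤ ∫ ω, (⟪w ω, e i⟫ ^ 2 * (1/2) + ‖A (e i)‖ ^ 2 * (‖x ω‖ ^ 2 * (1/2))) ∂μ :=
          integral_mono (hint i).norm hib hle
      _ = (∫ ω, ⟪w ω, e i⟫ ^ 2 ∂μ) * (1/2) + ‖A (e i)‖ ^ 2 * ((∫ ω, ‖x ω‖ ^ 2 ∂μ) * (1/2)) := by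
          rw [integral_add (((hw.inner_const (e i)).integrable_sq).mul_const _)
            ((hx2.mul_const _).const_mul _), integral_mul_const, integral_const_mul,
            integral_mul_const]
  have hsum : Summable (fun i => ∫ ω, ‖f i ω‖ ∂μ) := by
    refine Summable.of_nonneg_of_le (fun i => integral_nonneg fun ω => norm_nonneg _) hbound ?_
    exact ((my_summable_integral_inner_sq e hw).mul_right _).add (hA.mul_right _)
  have hswap := integral_tsum_of_summable_integral_norm hint hsum
  have hterm : ∀ i, ∫ ω, f i ω ∂μ = ⟪∫ ω, ⟪w ω, e i⟫ • x ω ∂μ, A (e i)⟫ := by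
    intro i
    have hgint : Integrable (fun ω => ⟪w ω, e i⟫ • x ω) μ := my_integrable_inner_smul hw hx (e i)
    calc ∫ ω, f i ω ∂μ = ∫ ω, ⟪⟪w ω, e i⟫ • x ω, A (e i)⟫ ∂μ :=
          integral_congr_ae (Filter.Eventually.of_forall fun ω =>
            (real_inner_smul_left _ _ _).symm)
      _ = ∫ ω, ⟪A (e i), ⟪w ω, e i⟫ • x ω⟫ ∂μ :=
          integral_congr_ae (Filter.Eventually.of_forall fun ω => real_inner_comm _ _)
      _ = ⟪A (e i), ∫ ω, ⟪w ω, e i⟫ • x ω ∂μ⟫ := integral_inner hgint (A (e i))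
      _ = ⟪∫ ω, ⟪w ω, e i⟫ • x ω ∂μ, A (e i)⟫ := real_inner_comm _ _
  calc ∫ ω, ⟪x ω, A (w ω)⟫ ∂μ = ∫ ω, ∑' i, f i ω ∂μ :=
        integral_congr_ae (Filter.Eventually.of_forall hpt)
    _ = ∑' i, ∫ ω, f i ω ∂μ := hswap.symm
    _ = ∑' i, ⟪∫ ω, ⟪w ω, e i⟫ • x ω ∂μ, A (e i)⟫ := tsum_congr hterm

end Aux

end MyAux


variable {Ω : Type*} [MeasurableSpace Ω]

set_option maxHeartbeats 2000000

/-- Regularised LCE formula: for `ε > 0`, the affine Hilbert–Schmidt map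
`γ_ε(v) = μ_U + C_{UV}(C_V + ε·Id)⁻¹(v − μ_V)` is the unique minimizer, among affine maps
`γ(h) = b + A h` with `A` Hilbert–Schmidt, of the Tikhonov-regularised functional
`E[‖U − γ∘V‖²] + ε‖A‖²_HS` (the HS norm squared computed via a Hilbert basis `e` of `H`). -/
theorem lce_regularized_formula
    (μ : Measure Ω) [IsProbabilityMeasure μ]
    {G H : Type*}
    [NormedAddCommGroup G] [InnerProductSpace ℝ G] [CompleteSpace G] [SecondCountableTopology G]
    [NormedAddCommGroup H] [InnerProductSpace ℝ H] [CompleteSpace H] [SecondCountableTopology H]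
    {ι : Type*} (e : HilbertBasis ι ℝ H)
    (U : Lp G 2 μ) (V : Lp H 2 μ)
    (CV : H →L[ℝ] H) (CUV : H →L[ℝ] G)
    (hCV : ∀ h : H, CV h =
      ∫ ω, (@inner ℝ _ _ (V ω - ∫ ω', V ω' ∂μ) h) • (V ω - ∫ ω', V ω' ∂μ) ∂μ)
    (hCUV : ∀ h : H, CUV h =
      ∫ ω, (@inner ℝ _ _ (V ω - ∫ ω', V ω' ∂μ) h) • (U ω - ∫ ω', U ω' ∂μ) ∂μ)
    (ε : ℝ) (hε : 0 < ε)
    (Rε : H →L[ℝ] H)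
    (hRε₁ : (CV + ε • ContinuousLinearMap.id ℝ H).comp Rε = ContinuousLinearMap.id ℝ H)
    (hRε₂ : Rε.comp (CV + ε • ContinuousLinearMap.id ℝ H) = ContinuousLinearMap.id ℝ H) :
    (∀ (b : G) (A : H →L[ℝ] G), Summable (fun i => ‖A (e i)‖ ^ 2) →
      (∫ ω, ‖U ω - ((∫ ω', U ω' ∂μ) + CUV (Rε (V ω - ∫ ω', V ω' ∂μ)))‖ ^ 2 ∂μ) +
          ε * ∑' i, ‖CUV (Rε (e i))‖ ^ 2 ≤
        (∫ ω, ‖U ω - (b + A (V ω))‖ ^ 2 ∂μ) + ε * ∑' i, ‖A (e i)‖ ^ 2) ∧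
    (∀ (b : G) (A : H →L[ℝ] G), Summable (fun i => ‖A (e i)‖ ^ 2) →
      (∫ ω, ‖U ω - (b + A (V ω))‖ ^ 2 ∂μ) + ε * ∑' i, ‖A (e i)‖ ^ 2 =
        (∫ ω, ‖U ω - ((∫ ω', U ω' ∂μ) + CUV (Rε (V ω - ∫ ω', V ω' ∂μ)))‖ ^ 2 ∂μ) +
          ε * ∑' i, ‖CUV (Rε (e i))‖ ^ 2 →
      ∀ v : H, b + A v = (∫ ω', U ω' ∂μ) + CUV (Rε (v - ∫ ω', V ω' ∂μ))) := by
  classical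
  haveI : Countable ι := my_hilbertBasis_countable e
  set mU : G := ∫ ω', U ω' ∂μ with hmU
  set mV : H := ∫ ω', V ω' ∂μ with hmV
  set M : H →L[ℝ] G := CUV.comp Rε with hMdef
  have hMe : ∀ z : H, CUV (Rε z) = M z := fun z => rfl
  simp only [hMe]
  clear_value mU mV M
  have hu : MemLp (fun ω => U ω) 2 μ := Lp.memLp U
  have hv : MemLp (fun ω => V ω) 2 μ := Lp.memLp V
  have hubar : MemLp (fun ω => U ω - mU) 2 μ := hu.sub (memLp_const mU)
  have hvbar : MemLp (fun ω => V ω - mV) 2 μ := hv.sub (memLp_const mV)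
  have hMv : MemLp (fun ω => M (V ω - mV)) 2 μ := M.comp_memLp' hvbar
  have hX : MemLp (fun ω => (U ω - mU) - M (V ω - mV)) 2 μ := hubar.sub hMv
  -- mean-zero facts
  have hubar0 : ∫ ω, (U ω - mU) ∂μ = 0 := by
    rw [integral_sub (hu.integrable one_le_two) (integrable_const _), integral_const,
      probReal_univ]
    simp [hmU]
  have hvbar0 : ∫ ω, (V ω - mV) ∂μ = 0 := by
    rw [integral_sub (hv.integrable one_le_two) (integrable_const _), integral_const,
      probReal_univ]
    simp [hmV]
  have hX0 : ∫ ω, ((U ω - mU) - M (V ω - mV)) ∂μ = 0 := by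
    rw [integral_sub (hubar.integrable one_le_two) (hMv.integrable one_le_two), hubar0,
      M.integral_comp_comm (hvbar.integrable one_le_two), hvbar0, map_zero, sub_zero]
  -- operator identity
  have hop : ∀ h : H, M (CV h) + ε • M h = CUV h := by
    intro h
    have h1 : Rε ((CV + ε • ContinuousLinearMap.id ℝ H) h) = h := by
      rw [← ContinuousLinearMap.comp_apply, hRε₂, ContinuousLinearMap.id_apply]
    have h2 : (CV + ε • ContinuousLinearMap.id ℝ H) h = CV h + ε • h := by
      simp
    rw [h2] at h1
    calc M (CV h) + ε • M h = CUV (Rε (CV h + ε • h)) := by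
          rw [hMdef]
          simp only [ContinuousLinearMap.comp_apply, map_add, _root_.map_smul]
      _ = CUV h := by rw [h1]
  -- representation of M and Hilbert-Schmidt property
  have hMrep : ∀ h : H,
      M h = ∫ ω, (@inner ℝ _ _ ((ContinuousLinearMap.adjoint Rε) (V ω - mV)) h) • (U ω - mU) ∂μ := by
    intro h
    have h1 : M h = CUV (Rε h) := (hMe h).symm
    rw [h1, hCUV (Rε h)]
    refine integral_congr_ae (Filter.Eventually.of_forall fun ω => ?_)
    beta_reduce
    rw [ContinuousLinearMap.adjoint_inner_left Rε h (V ω - mV)]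
  have hw' : MemLp (fun ω => (ContinuousLinearMap.adjoint Rε) (V ω - mV)) 2 μ :=
    (ContinuousLinearMap.adjoint Rε).comp_memLp' hvbar
  have hMsum : Summable (fun i => ‖M (e i)‖ ^ 2) := by
    refine (my_summable_norm_sq_integral e hw' hubar).congr fun i => ?_
    rw [hMrep (e i)]
  have hDsum' : ∀ A : H →L[ℝ] G, Summable (fun i => ‖A (e i)‖ ^ 2) →
      Summable (fun i => ‖(A - M) (e i)‖ ^ 2) := by
    intro A hA
    refine Summable.of_nonneg_of_le (fun i => sq_nonneg _) (fun i => ?_)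
      ((hA.add hMsum).mul_left 2)
    have h1 : ‖(A - M) (e i)‖ ≤ ‖A (e i)‖ + ‖M (e i)‖ := by
      simpa using norm_sub_le (A (e i)) (M (e i))
    nlinarith [pow_le_pow_left₀ (norm_nonneg ((A - M) (e i))) h1 2,
      sq_nonneg (‖A (e i)‖ - ‖M (e i)‖)]
  have hptmin : ∀ ω : Ω, U ω - (mU + M (V ω - mV)) = (U ω - mU) - M (V ω - mV) :=
    fun ω => by abel
  have e1 : (∫ ω, ‖U ω - (mU + M (V ω - mV))‖ ^ 2 ∂μ)
      = ∫ ω, ‖(U ω - mU) - M (V ω - mV)‖ ^ 2 ∂μ :=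
    integral_congr_ae (Filter.Eventually.of_forall fun ω => by beta_reduce; rw [hptmin ω])
  -- master identity
  have master : ∀ (b : G) (A : H →L[ℝ] G), Summable (fun i => ‖A (e i)‖ ^ 2) →
      (∫ ω, ‖U ω - (b + A (V ω))‖ ^ 2 ∂μ) + ε * ∑' i, ‖A (e i)‖ ^ 2 =
      ((∫ ω, ‖(U ω - mU) - M (V ω - mV)‖ ^ 2 ∂μ) + ε * ∑' i, ‖M (e i)‖ ^ 2)
      + ((∫ ω, ‖(A - M) (V ω - mV)‖ ^ 2 ∂μ) + ‖b - mU + A mV‖ ^ 2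
         + ε * ∑' i, ‖(A - M) (e i)‖ ^ 2) := by
    intro b A hA
    set D : H →L[ℝ] G := A - M with hDdef
    set δ : G := b - mU + A mV with hδdef
    clear_value D δ
    have hDv : MemLp (fun ω => D (V ω - mV)) 2 μ := D.comp_memLp' hvbar
    have hDsum : Summable (fun i => ‖D (e i)‖ ^ 2) := by rw [hDdef]; exact hDsum' A hA
    have hMD : Summable (fun i => @inner ℝ _ _ (M (e i)) (D (e i))) := by
      apply Summable.of_abs
      refine Summable.of_nonneg_of_le (fun i => abs_nonneg _) (fun i => ?_)
        ((hMsum.add hDsum).mul_left (1/2))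
      have h1 : |@inner ℝ _ _ (M (e i)) (D (e i))| ≤ ‖M (e i)‖ * ‖D (e i)‖ :=
        abs_real_inner_le_norm _ _
      nlinarith [norm_nonneg (M (e i)), norm_nonneg (D (e i)),
        sq_nonneg (‖M (e i)‖ - ‖D (e i)‖)]
    have hT : ∀ h : H,
        (∫ ω, (@inner ℝ _ _ (V ω - mV) h) • ((U ω - mU) - M (V ω - mV)) ∂μ) = ε • M h := by
      intro h
      have hi1 : Integrable (fun ω => (@inner ℝ _ _ (V ω - mV) h) • (U ω - mU)) μ :=
        my_integrable_inner_smul hvbar hubar h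
      have hi2 : Integrable (fun ω => (@inner ℝ _ _ (V ω - mV) h) • M (V ω - mV)) μ :=
        my_integrable_inner_smul hvbar hMv h
      have hsplit : (fun ω => (@inner ℝ _ _ (V ω - mV) h) • ((U ω - mU) - M (V ω - mV)))
          = fun ω => (@inner ℝ _ _ (V ω - mV) h) • (U ω - mU)
              - (@inner ℝ _ _ (V ω - mV) h) • M (V ω - mV) := by
        funext ω; rw [smul_sub]
      rw [hsplit, integral_sub hi1 hi2, ← hCUV h]
      have h2 : ∫ ω, (@inner ℝ _ _ (V ω - mV) h) • M (V ω - mV) ∂μ = M (CV h) := by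
        have h3 : (fun ω => (@inner ℝ _ _ (V ω - mV) h) • M (V ω - mV))
            = fun ω => M ((@inner ℝ _ _ (V ω - mV) h) • (V ω - mV)) := by
          funext ω; rw [_root_.map_smul]
        rw [h3, M.integral_comp_comm (my_integrable_inner_smul hvbar hvbar h), ← hCV h]
      rw [h2, ← hop h]
      abel
    have hKID : ∫ ω, @inner ℝ _ _ ((U ω - mU) - M (V ω - mV)) (D (V ω - mV)) ∂μ
        = ε * ∑' i, @inner ℝ _ _ (M (e i)) (D (e i)) := by
      rw [my_integral_inner_eq_tsum e hvbar hX D hDsum]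
      calc (∑' i, @inner ℝ _ _
              (∫ ω, (@inner ℝ _ _ (V ω - mV) (e i)) • ((U ω - mU) - M (V ω - mV)) ∂μ) (D (e i)))
          = ∑' i, ε * @inner ℝ _ _ (M (e i)) (D (e i)) :=
            tsum_congr fun i => by rw [hT (e i), real_inner_smul_left]
        _ = ε * ∑' i, @inner ℝ _ _ (M (e i)) (D (e i)) := tsum_mul_left
    have I1 : Integrable (fun ω => ‖(U ω - mU) - M (V ω - mV)‖ ^ 2) μ :=
      (memLp_two_iff_integrable_sq_norm hX.1).1 hX
    have I2 : Integrable (fun ω => ‖D (V ω - mV)‖ ^ 2) μ :=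
      (memLp_two_iff_integrable_sq_norm hDv.1).1 hDv
    have I4 : Integrable (fun ω => @inner ℝ _ _ ((U ω - mU) - M (V ω - mV)) (D (V ω - mV))) μ :=
      my_integrable_inner hX hDv
    have I5 : Integrable (fun ω => @inner ℝ _ _ ((U ω - mU) - M (V ω - mV)) δ) μ :=
      (hX.integrable one_le_two).inner_const δ
    have I6 : Integrable (fun ω => @inner ℝ _ _ (D (V ω - mV)) δ) μ :=
      (hDv.integrable one_le_two).inner_const δ
    have hc1 : ∫ ω, @inner ℝ _ _ ((U ω - mU) - M (V ω - mV)) δ ∂μ = 0 := by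
      have h1 : ∫ ω, @inner ℝ _ _ ((U ω - mU) - M (V ω - mV)) δ ∂μ
          = @inner ℝ _ _ δ (∫ ω, ((U ω - mU) - M (V ω - mV)) ∂μ) := by
        rw [← integral_inner (hX.integrable one_le_two) δ]
        exact integral_congr_ae (Filter.Eventually.of_forall fun ω => real_inner_comm _ _)
      rw [h1, hX0, inner_zero_right]
    have hDv0 : ∫ ω, D (V ω - mV) ∂μ = 0 := by
      rw [D.integral_comp_comm (hvbar.integrable one_le_two), hvbar0, map_zero]
    have hc2 : ∫ ω, @inner ℝ _ _ (D (V ω - mV)) δ ∂μ = 0 := by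
      have h1 : ∫ ω, @inner ℝ _ _ (D (V ω - mV)) δ ∂μ
          = @inner ℝ _ _ δ (∫ ω, D (V ω - mV) ∂μ) := by
        rw [← integral_inner (hDv.integrable one_le_two) δ]
        exact integral_congr_ae (Filter.Eventually.of_forall fun ω => real_inner_comm _ _)
      rw [h1, hDv0, inner_zero_right]
    have hexp : (fun ω => ‖U ω - (b + A (V ω))‖ ^ 2)
        = fun ω => (‖(U ω - mU) - M (V ω - mV)‖ ^ 2 + ‖D (V ω - mV)‖ ^ 2 + ‖δ‖ ^ 2
            + 2 * @inner ℝ _ _ (D (V ω - mV)) δ)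
          - (2 * @inner ℝ _ _ ((U ω - mU) - M (V ω - mV)) (D (V ω - mV))
             + 2 * @inner ℝ _ _ ((U ω - mU) - M (V ω - mV)) δ) := by
      funext ω
      have harg : U ω - (b + A (V ω)) = ((U ω - mU) - M (V ω - mV)) - D (V ω - mV) - δ := by
        rw [hDdef, hδdef]
        simp only [ContinuousLinearMap.sub_apply, map_sub]
        abel
      rw [harg, norm_sub_sq_real (((U ω - mU) - M (V ω - mV)) - D (V ω - mV)) δ,
        norm_sub_sq_real ((U ω - mU) - M (V ω - mV)) (D (V ω - mV)),
        inner_sub_left ((U ω - mU) - M (V ω - mV)) (D (V ω - mV)) δ]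
      ring
    have hIexp : ∫ ω, ‖U ω - (b + A (V ω))‖ ^ 2 ∂μ
        = (∫ ω, ‖(U ω - mU) - M (V ω - mV)‖ ^ 2 ∂μ) + (∫ ω, ‖D (V ω - mV)‖ ^ 2 ∂μ) + ‖δ‖ ^ 2
          - 2 * (ε * ∑' i, @inner ℝ _ _ (M (e i)) (D (e i))) := by
      have Ic : Integrable (fun _ : Ω => ‖δ‖ ^ 2) μ := integrable_const _
      have I4' : Integrable
          (fun ω => 2 * @inner ℝ _ _ ((U ω - mU) - M (V ω - mV)) (D (V ω - mV))) μ :=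
        I4.const_mul 2
      have I5' : Integrable (fun ω => 2 * @inner ℝ _ _ ((U ω - mU) - M (V ω - mV)) δ) μ :=
        I5.const_mul 2
      have I6' : Integrable (fun ω => 2 * @inner ℝ _ _ (D (V ω - mV)) δ) μ := I6.const_mul 2
      have K3 : Integrable
          (fun ω => ‖(U ω - mU) - M (V ω - mV)‖ ^ 2 + ‖D (V ω - mV)‖ ^ 2) μ := I1.add I2
      have K2 : Integrable
          (fun ω => ‖(U ω - mU) - M (V ω - mV)‖ ^ 2 + ‖D (V ω - mV)‖ ^ 2 + ‖δ‖ ^ 2) μ :=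
        K3.add Ic
      have J1 : Integrable
          (fun ω => ‖(U ω - mU) - M (V ω - mV)‖ ^ 2 + ‖D (V ω - mV)‖ ^ 2 + ‖δ‖ ^ 2
            + 2 * @inner ℝ _ _ (D (V ω - mV)) δ) μ := K2.add I6'
      have J2 : Integrable
          (fun ω => 2 * @inner ℝ _ _ ((U ω - mU) - M (V ω - mV)) (D (V ω - mV))
            + 2 * @inner ℝ _ _ ((U ω - mU) - M (V ω - mV)) δ) μ := I4'.add I5'
      rw [hexp, integral_sub J1 J2, integral_add K2 I6', integral_add K3 Ic,
        integral_add I1 I2, integral_add I4' I5',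
        integral_const_mul, integral_const_mul, integral_const_mul,
        hc1, hc2, hKID, integral_const, probReal_univ]
      simp only [ENNReal.toReal_one, one_smul, mul_zero]
      ring
    have htsum : ∑' i, ‖A (e i)‖ ^ 2
        = ∑' i, ‖D (e i)‖ ^ 2 + 2 * ∑' i, @inner ℝ _ _ (M (e i)) (D (e i))
          + ∑' i, ‖M (e i)‖ ^ 2 := by
      have hpt : ∀ i : ι, ‖A (e i)‖ ^ 2
          = (‖D (e i)‖ ^ 2 + 2 * @inner ℝ _ _ (M (e i)) (D (e i))) + ‖M (e i)‖ ^ 2 := by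
        intro i
        have hAi : A (e i) = D (e i) + M (e i) := by rw [hDdef]; simp
        rw [hAi, norm_add_sq_real, real_inner_comm (D (e i)) (M (e i))]
      rw [tsum_congr hpt, Summable.tsum_add (hDsum.add (hMD.mul_left 2)) hMsum,
        Summable.tsum_add hDsum (hMD.mul_left 2), tsum_mul_left]
    rw [hIexp, htsum]
    ring
  constructor
  · intro b A hA
    rw [e1]
    have hm := master b A hA
    have h1 : 0 ≤ ∫ ω, ‖(A - M) (V ω - mV)‖ ^ 2 ∂μ := integral_nonneg fun ω => sq_nonneg _
    have h2 : 0 ≤ ∑' i, ‖(A - M) (e i)‖ ^ 2 := tsum_nonneg fun i => sq_nonneg _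
    nlinarith [sq_nonneg ‖b - mU + A mV‖, mul_nonneg hε.le h2]
  · intro b A hA heq
    rw [e1] at heq
    have hm := master b A hA
    have h1 : 0 ≤ ∫ ω, ‖(A - M) (V ω - mV)‖ ^ 2 ∂μ := integral_nonneg fun ω => sq_nonneg _
    have h2 : 0 ≤ ∑' i, ‖(A - M) (e i)‖ ^ 2 := tsum_nonneg fun i => sq_nonneg _
    have h3 : 0 ≤ ‖b - mU + A mV‖ ^ 2 := sq_nonneg _
    have hsD0 : ∑' i, ‖(A - M) (e i)‖ ^ 2 = 0 := by
      have hεs : 0 ≤ ε * ∑' i, ‖(A - M) (e i)‖ ^ 2 := mul_nonneg hε.le h2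
      have : ε * ∑' i, ‖(A - M) (e i)‖ ^ 2 = 0 := by linarith
      exact (mul_eq_zero.mp this).resolve_left hε.ne'
    have hδ0 : ‖b - mU + A mV‖ ^ 2 = 0 := by
      have hεs : 0 ≤ ε * ∑' i, ‖(A - M) (e i)‖ ^ 2 := mul_nonneg hε.le h2
      linarith
    have hDi : ∀ i : ι, (A - M) (e i) = 0 := by
      intro i
      have hle := Summable.le_tsum (hDsum' A hA) i (fun j _ => sq_nonneg _)
      have h0 : ‖(A - M) (e i)‖ ^ 2 = 0 := le_antisymm (by rw [← hsD0]; exact hle) (sq_nonneg _)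
      have := pow_eq_zero_iff (n := 2) (by norm_num) |>.mp h0
      rwa [norm_eq_zero] at this
    have hAM : A = M := by
      have hD0 : A - M = 0 := by
        apply ContinuousLinearMap.ext_on
          (Submodule.dense_iff_topologicalClosure_eq_top.mpr e.dense_span)
        rintro x ⟨i, rfl⟩
        simpa using hDi i
      exact sub_eq_zero.mp hD0
    have hb : b = mU - M mV := by
      have h0 : b - mU + A mV = 0 := by
        have := pow_eq_zero_iff (n := 2) (by norm_num) |>.mp hδ0
        rwa [norm_eq_zero] at this
      rw [hAM] at h0
      have h1' : b - (mU - M mV) = b - mU + M mV := by abel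
      exact sub_eq_zero.mp (h1'.trans h0)
    intro v
    rw [hAM, hb, map_sub]
    abel

end
end
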